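/- Let K be a field, let n ≥ 1, let q be a positive integer, and let a₀, a₁, …, a_n ∈ K[X] with a_n ≠ 0. Set d = q · (the multiplicity of 0 as a root of a_n). Then every γ ∈ K((T)) satisfying Σ_{i=0}^n (a_i evaluated at T^q in K((T))) · γ^{n−i} = 0 is nonzero and has order at most d; equivalently, if γ ∈ K((T)) is zero or has order greater than d, then Σ_{i=0}^n (a_i evaluated at T^q) · γ^{n−i} ≠ 0. -/

import Mathlib

open Polynomial

section aux
variable {K : Type*} [Field K] (q : ℕ+)

lemma aux_coeff_sum {K : Type*} [Field K] {α : Type*} (s : Finset α)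
    (f : α → LaurentSeries K) (j : ℤ) :
    (∑ i ∈ s, f i).coeff j = ∑ i ∈ s, (f i).coeff j :=
  map_sum (HahnSeries.coeff.addMonoidHom j) f s

lemma aux_coeff_aeval (p : K[X]) (j : ℤ) :
    (aeval (HahnSeries.single ((q : ℕ) : ℤ) (1 : K)) p).coeff j
      = ∑ i ∈ Finset.range (p.natDegree + 1),
          if j = (q : ℕ) * i then p.coeff i else 0 := by
  rw [aeval_eq_sum_range, aux_coeff_sum]
  refine Finset.sum_congr rfl fun i _ => ?_
  rw [HahnSeries.single_pow, one_pow, nsmul_eq_mul]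
  rw [Algebra.smul_def, HahnSeries.algebraMap_apply', PowerSeries.algebraMap_apply,
    Algebra.algebraMap_self, RingHom.id_apply, HahnSeries.ofPowerSeries_C, HahnSeries.C_apply,
    HahnSeries.single_mul_single, zero_add,
    mul_one, HahnSeries.coeff_single, mul_comm ((i:ℤ))]
  congr 1

lemma aux_coeff_neg (p : K[X]) {j : ℤ} (hj : j < 0) :
    (aeval (HahnSeries.single ((q : ℕ) : ℤ) (1 : K)) p).coeff j = 0 := by
  rw [aux_coeff_aeval]
  refine Finset.sum_eq_zero fun i _ => ?_
  have : ¬ (j = (q : ℕ) * i) := by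
    intro h
    have : (0:ℤ) ≤ (q : ℕ) * i := by positivity
    omega
  simp [this]

lemma aux_coeff_zero (p : K[X]) :
    (aeval (HahnSeries.single ((q : ℕ) : ℤ) (1 : K)) p).coeff 0 = p.coeff 0 := by
  rw [aux_coeff_aeval]
  rw [Finset.sum_eq_single_of_mem 0 (Finset.mem_range.2 (Nat.succ_pos _))]
  · simp
  · intro i _ hi
    have hne : ¬ ((0:ℤ) = (q : ℕ) * i) := by
      intro h
      have h' : (q:ℕ) * i = 0 := by exact_mod_cast h.symm
      rcases Nat.mul_eq_zero.1 h' with h'' | h''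
      · exact q.pos.ne' h''
      · exact hi h''
    simp [hne]

lemma aux_order_nonneg (p : K[X]) :
    0 ≤ (aeval (HahnSeries.single ((q : ℕ) : ℤ) (1 : K)) p).order := by
  by_cases hp : aeval (HahnSeries.single ((q : ℕ) : ℤ) (1 : K)) p = 0
  · simp [hp]
  by_contra h
  push_neg at h
  exact (HahnSeries.coeff_order_eq_zero.not.2 hp) (aux_coeff_neg q p h)

lemma aux_order_eq (p : K[X]) (hp : p ≠ 0) :
    aeval (HahnSeries.single ((q : ℕ) : ℤ) (1 : K)) p ≠ 0 ∧
    (aeval (HahnSeries.single ((q : ℕ) : ℤ) (1 : K)) p).order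
      = ((q : ℕ) * p.rootMultiplicity 0 : ℕ) := by
  obtain ⟨b, hpb, hdvd⟩ := p.exists_eq_pow_rootMultiplicity_mul_and_not_dvd hp 0
  set m := p.rootMultiplicity 0 with hm
  rw [map_zero, sub_zero] at hpb hdvd
  have hb0 : b.coeff 0 ≠ 0 := fun h => hdvd (Polynomial.X_dvd_iff.2 h)
  have hb : aeval (HahnSeries.single ((q : ℕ) : ℤ) (1 : K)) b ≠ 0 := by
    intro h
    apply hb0
    rw [← aux_coeff_zero q b, h, HahnSeries.coeff_zero]
  have hob : (aeval (HahnSeries.single ((q : ℕ) : ℤ) (1 : K)) b).order = 0 := by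
    refine le_antisymm (HahnSeries.order_le_of_coeff_ne_zero ?_) (aux_order_nonneg q b)
    rw [aux_coeff_zero q b]; exact hb0
  have key : aeval (HahnSeries.single ((q : ℕ) : ℤ) (1 : K)) p
      = HahnSeries.single (((q : ℕ) * m : ℕ) : ℤ) (1 : K)
        * aeval (HahnSeries.single ((q : ℕ) : ℤ) (1 : K)) b := by
    conv_lhs => rw [hpb]
    rw [map_mul, map_pow, aeval_X, HahnSeries.single_pow, one_pow, nsmul_eq_mul]
    congr 2
    push_cast; ring
  have hs : (HahnSeries.single (((q : ℕ) * m : ℕ) : ℤ) (1 : K) : LaurentSeries K) ≠ 0 :=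
    HahnSeries.single_ne_zero one_ne_zero
  refine ⟨by rw [key]; exact mul_ne_zero hs hb, ?_⟩
  rw [key, HahnSeries.order_mul hs hb, hob, add_zero, HahnSeries.order_single one_ne_zero]
end aux

/-- A bound on the order of Laurent series roots: if `aₙ ≠ 0` and
`γ ∈ K((T))` satisfies `Σ_{i=0}^n aᵢ(T^q)·γ^(n-i) = 0`, then `γ ≠ 0` and
`order γ ≤ q · (multiplicity of 0 as a root of aₙ)`. -/
theorem statement8 {K : Type*} [Field K] (n : ℕ) (hn : 1 ≤ n) (q : ℕ+)
    (a : ℕ → Polynomial K) (han : a n ≠ 0) :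
    ∀ γ : LaurentSeries K,
      (∑ i ∈ Finset.range (n + 1),
          aeval ((HahnSeries.single (1 : ℤ) (1 : K)) ^ (q : ℕ)) (a i) * γ ^ (n - i)) = 0 →
      γ ≠ 0 ∧ γ.order ≤ ((q : ℕ) * Polynomial.rootMultiplicity 0 (a n) : ℕ) := by
  have hTq : (HahnSeries.single (1 : ℤ) (1 : K)) ^ (q : ℕ)
      = HahnSeries.single ((q : ℕ) : ℤ) (1 : K) := by
    rw [HahnSeries.single_pow, one_pow, nsmul_eq_mul, mul_one]
  intro γ hsum
  rw [hTq] at hsum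
  obtain ⟨hφn, hord⟩ := aux_order_eq q (a n) han
  have hγ : γ ≠ 0 := by
    rintro rfl
    rw [Finset.sum_range_succ] at hsum
    have h1 : ∀ i ∈ Finset.range n,
        aeval (HahnSeries.single ((q : ℕ) : ℤ) (1 : K)) (a i) * (0:LaurentSeries K) ^ (n - i)
          = 0 := by
      intro i hi
      rw [Finset.mem_range] at hi
      rw [zero_pow (by omega : n - i ≠ 0), mul_zero]
    rw [Finset.sum_eq_zero h1, zero_add, Nat.sub_self, pow_zero, mul_one] at hsum
    exact hφn hsum
  refine ⟨hγ, ?_⟩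
  by_contra h
  push_neg at h
  set d : ℤ := (((q : ℕ) * (a n).rootMultiplicity 0 : ℕ) : ℤ) with hd
  have hd0 : 0 ≤ d := Int.natCast_nonneg _
  have hcoeff := congrArg (fun x : LaurentSeries K => x.coeff d) hsum
  simp only [HahnSeries.coeff_zero] at hcoeff
  rw [aux_coeff_sum, Finset.sum_range_succ] at hcoeff
  have h1 : ∀ i ∈ Finset.range n,
      (aeval (HahnSeries.single ((q : ℕ) : ℤ) (1 : K)) (a i) * γ ^ (n - i)).coeff d = 0 := by
    intro i hi
    rw [Finset.mem_range] at hi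
    by_cases hz : aeval (HahnSeries.single ((q : ℕ) : ℤ) (1 : K)) (a i) * γ ^ (n - i) = 0
    · rw [hz, HahnSeries.coeff_zero]
    have hφ : aeval (HahnSeries.single ((q : ℕ) : ℤ) (1 : K)) (a i) ≠ 0 :=
      left_ne_zero_of_mul hz
    have hγp : γ ^ (n - i) ≠ 0 := pow_ne_zero _ hγ
    apply HahnSeries.coeff_eq_zero_of_lt_order
    rw [HahnSeries.order_mul hφ hγp, HahnSeries.order_pow, nsmul_eq_mul]
    have hni : 1 ≤ ((n - i : ℕ) : ℤ) := by
      have : 1 ≤ n - i := by omega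
      exact_mod_cast this
    have hγo : d < γ.order := h
    calc d < γ.order := hγo
    _ ≤ ((n - i : ℕ) : ℤ) * γ.order := le_mul_of_one_le_left (le_trans hd0 h.le) hni
    _ ≤ _ := le_add_of_nonneg_left (aux_order_nonneg q (a i))
  rw [Finset.sum_eq_zero h1, zero_add, Nat.sub_self, pow_zero, mul_one] at hcoeff
  apply (HahnSeries.coeff_order_eq_zero.not.2 hφn)
  rw [hord]
  exact hcoeff
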